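/- Linearization of the A₁⁽¹⁾ mutation recurrence: let x₁, x₂ be an A₁⁽¹⁾ X-variable sequence, let t be a sequence of nonzero elements of F, and let a be a sequence of nonzero elements of F satisfying a(j+2)·a(j)·t(j) = a(j+1)²·(1 + x₁(j)) for all j ∈ ℕ. Let γ be the sequence with γ(0) = 1 and γ(j+1)·t(j) = γ(j), and set β₀ = a(1)/a(0), K₁ = 1 + x₁(0) + x₁(0)·x₂(0), K₂ = x₁(0)·x₂(0). Then for all j ∈ ℕ: γ(j)⁻¹·γ(j+1)⁻¹·a(j+2) − β₀·K₁·γ(j)⁻¹·a(j+1) + β₀²·K₂·a(j) = 0. -/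

import Mathlib

private def uSeq {F : Type*} [Field F] (x : ℕ → F) : ℕ → F
  | 0 => 1
  | j + 1 => uSeq x j * (1 + x j)

/-- Linearization of the `A₁⁽¹⁾` mutation recurrence. -/
theorem a11_linearization {F : Type*} [Field F] (x₁ x₂ : ℕ → F)
    (hx₁ : ∀ j, x₁ j ≠ 0) (hx₁' : ∀ j, 1 + x₁ j ≠ 0)
    (hmut₁ : ∀ j, x₁ (j + 1) * (1 + x₁ j) ^ 2 = x₂ j * (x₁ j) ^ 2)
    (hmut₂ : ∀ j, x₂ (j + 1) * x₁ j = 1)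
    (t : ℕ → F) (ht : ∀ j, t j ≠ 0)
    (a : ℕ → F) (ha : ∀ j, a j ≠ 0)
    (harec : ∀ j, a (j + 2) * a j * t j = (a (j + 1)) ^ 2 * (1 + x₁ j))
    (γ : ℕ → F) (hγ0 : γ 0 = 1) (hγ : ∀ j, γ (j + 1) * t j = γ j)
    (β₀ K₁ K₂ : F) (hβ₀ : β₀ = a 1 / a 0)
    (hK₁ : K₁ = 1 + x₁ 0 + x₁ 0 * x₂ 0) (hK₂ : K₂ = x₁ 0 * x₂ 0) :
    ∀ j, (γ j)⁻¹ * (γ (j + 1))⁻¹ * a (j + 2)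
        - β₀ * K₁ * (γ j)⁻¹ * a (j + 1) + β₀ ^ 2 * K₂ * a j = 0 := by
  set u := uSeq x₁ with hu
  have hu0 : u 0 = 1 := rfl
  have hus : ∀ j, u (j + 1) = u j * (1 + x₁ j) := fun j => rfl
  have hune : ∀ j, u j ≠ 0 := by
    intro j
    induction j with
    | zero => rw [hu0]; exact one_ne_zero
    | succ k ih => rw [hus]; exact mul_ne_zero ih (hx₁' k)
  have hγne : ∀ j, γ j ≠ 0 := by
    intro j
    induction j with
    | zero => rw [hγ0]; exact one_ne_zero
    | succ k ih =>
      intro h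
      apply ih
      rw [← hγ k, h, zero_mul]
  -- conserved quantities
  have hA : ∀ j, u j * (1 + x₁ j + x₁ j * x₂ j) = K₁ ∧ u j ^ 2 * (x₁ j * x₂ j) = K₂ := by
    intro j
    induction j with
    | zero => constructor <;> simp [hu0, hK₁, hK₂]
    | succ k ih =>
      obtain ⟨ih1, ih2⟩ := ih
      have e1 := hmut₁ k
      have e2 := hmut₂ k
      constructor
      · have h1 : (1 + x₁ (k + 1) + x₁ (k + 1) * x₂ (k + 1)) * ((1 + x₁ k) * x₁ k)
            = (1 + x₁ k + x₁ k * x₂ k) * x₁ k := by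
          have h1' : (1 + x₁ (k + 1) + x₁ (k + 1) * x₂ (k + 1)) * ((1 + x₁ k) * x₁ k) * (1 + x₁ k)
              = (1 + x₁ k + x₁ k * x₂ k) * x₁ k * (1 + x₁ k) := by
            linear_combination (x₁ k + x₂ (k + 1) * x₁ k) * e1
              + (x₁ k ^ 2 * x₂ k) * e2
          exact mul_right_cancel₀ (hx₁' k) h1'
        rw [← ih1, hus]
        calc u k * (1 + x₁ k) * (1 + x₁ (k + 1) + x₁ (k + 1) * x₂ (k + 1))
            = u k * ((1 + x₁ (k + 1) + x₁ (k + 1) * x₂ (k + 1)) * ((1 + x₁ k) * x₁ k)) * (x₁ k)⁻¹ := by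
              field_simp [hx₁ k]
          _ = u k * ((1 + x₁ k + x₁ k * x₂ k) * x₁ k) * (x₁ k)⁻¹ := by rw [h1]
          _ = u k * (1 + x₁ k + x₁ k * x₂ k) := by field_simp [hx₁ k]
      · have h2 : x₁ (k + 1) * x₂ (k + 1) * (1 + x₁ k) ^ 2 = x₁ k * x₂ k := by
          have h2' : x₁ (k + 1) * x₂ (k + 1) * (1 + x₁ k) ^ 2 * x₁ k
              = x₁ k * x₂ k * x₁ k := by
            linear_combination (x₂ (k + 1) * x₁ k) * e1 + (x₂ k * x₁ k ^ 2) * e2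
          exact mul_right_cancel₀ (hx₁ k) h2'
        rw [← ih2, hus]
        calc (u k * (1 + x₁ k)) ^ 2 * (x₁ (k + 1) * x₂ (k + 1))
            = u k ^ 2 * (x₁ (k + 1) * x₂ (k + 1) * (1 + x₁ k) ^ 2) := by ring
          _ = u k ^ 2 * (x₁ k * x₂ k) := by rw [h2]
  -- the linear form of a
  have ha1 : ∀ j, a (j + 1) = β₀ * u j * γ j * a j := by
    intro j
    induction j with
    | zero =>
      rw [hβ₀, hu0, hγ0]
      field_simp
      exact (mul_div_cancel_right₀ (a 1) (ha 0)).symm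
    | succ k ih =>
      have hγk := hγ k
      have hak := ha k
      have htk := ht k
      have hγk1 : γ (k + 1) = γ k / t k := by
        field_simp
        linear_combination hγ k
      have key : a (k + 2) * (t k * a k) = β₀ ^ 2 * u k ^ 2 * (1 + x₁ k) * γ k ^ 2 * a k ^ 2 := by
        have hr := harec k
        rw [ih] at hr
        linear_combination hr
      show a (k + 2) = β₀ * u (k + 1) * γ (k + 1) * a (k + 1)
      rw [hus, hγk1, ih]
      calc a (k + 2) = a (k + 2) * (t k * a k) / (t k * a k) := by field_simp
        _ = β₀ ^ 2 * u k ^ 2 * (1 + x₁ k) * γ k ^ 2 * a k ^ 2 / (t k * a k) := by rw [key]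
        _ = β₀ * (u k * (1 + x₁ k)) * (γ k / t k) * (β₀ * u k * γ k * a k) := by
            field_simp
  intro j
  have e2 : a (j + 2) = β₀ * u (j + 1) * γ (j + 1) * a (j + 1) := ha1 (j + 1)
  rw [e2, ha1 j, hus j]
  obtain ⟨hA1, hA2⟩ := hA j
  have hkk1 : K₁ * u j = u j ^ 2 * (1 + x₁ j + x₁ j * x₂ j) := by
    rw [← hA1]; ring
  have c1 : (γ j)⁻¹ * γ j = 1 := inv_mul_cancel₀ (hγne j)
  have c2 : (γ (j + 1))⁻¹ * γ (j + 1) = 1 := inv_mul_cancel₀ (hγne (j + 1))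
  linear_combination
    (β₀ ^ 2 * a j * u j ^ 2 * (1 + x₁ j) * ((γ (j + 1))⁻¹ * γ (j + 1))
      - β₀ ^ 2 * a j * K₁ * u j) * c1
    + (β₀ ^ 2 * a j * u j ^ 2 * (1 + x₁ j)) * c2
    - (β₀ ^ 2 * a j) * hkk1
    - (β₀ ^ 2 * a j) * hA2
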